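/- Properties of the adversarial structures A_n: for every n ∈ ℕ, let A_n be the structure with domain D_n = {u_0, u_0', u_1, u_1', …, u_{n-1}', u_n, v} (all elements distinct), with a = {(u_i, u_i') : i < n} ∪ {(u_i', u_{i+1}) : i < n} and b = {(u_n, v)}. Then: (i) there is no w ∈ D_n with a(w, v); (ii) there is no w ∈ D_n with TransGen(b ; TransGen a)(w, v); and (iii) TransGen((a;a) ∪ (a;b;a))(u_0, v) does not hold. -/

import Mathlib

/-- The domain of the adversarial structure `A_n`:
elements `u_0, …, u_n`, `u_0', …, u_{n-1}'` and `v`, all pairwise distinct. -/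
inductive Adv (n : ℕ) : Type where
  | u : Fin (n + 1) → Adv n
  | u' : Fin n → Adv n
  | v : Adv n

/-- The interpretation of the relation symbol `a` in `A_n`:
`a = {(u_i, u_i') : i < n} ∪ {(u_i', u_{i+1}) : i < n}`. -/
def advA {n : ℕ} : Adv n → Adv n → Prop := fun x y =>
  (∃ i : Fin n, x = Adv.u i.castSucc ∧ y = Adv.u' i) ∨
  (∃ i : Fin n, x = Adv.u' i ∧ y = Adv.u i.succ)

/-- The interpretation of the relation symbol `b` in `A_n`: `b = {(u_n, v)}`. -/
def advB {n : ℕ} : Adv n → Adv n → Prop := fun x y =>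
  x = Adv.u (Fin.last n) ∧ y = Adv.v

lemma advA_not_v {n : ℕ} (w : Adv n) : ¬ advA w Adv.v := by
  rintro (⟨i, _, h⟩ | ⟨i, _, h⟩) <;> exact nomatch h

lemma transGen_not_v {n : ℕ} {R : Adv n → Adv n → Prop}
    (hR : ∀ w, ¬ R w Adv.v) (w : Adv n) :
    ¬ Relation.TransGen R w Adv.v := by
  intro h
  cases h with
  | single h => exact hR _ h
  | tail _ h => exact hR _ h

/-- Properties of the adversarial structures `A_n`:
(i) no `a`-edge into `v`; (ii) no `(b ; a⁺)⁺`-path into `v`;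
(iii) `(aa ∪ aba)⁺(u_0, v)` fails. -/
theorem adversarial_model_properties (n : ℕ) :
    (¬ ∃ w : Adv n, advA w Adv.v) ∧
    (¬ ∃ w : Adv n,
      Relation.TransGen (Relation.Comp advB (Relation.TransGen advA)) w Adv.v) ∧
    ¬ Relation.TransGen
        (fun x y : Adv n => Relation.Comp advA advA x y ∨
          Relation.Comp advA (Relation.Comp advB advA) x y)
        (Adv.u (0 : Fin (n + 1))) Adv.v := by
  refine ⟨fun ⟨w, h⟩ => advA_not_v w h, ?_, ?_⟩
  · rintro ⟨w, h⟩
    refine transGen_not_v ?_ w h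
    rintro x ⟨m, _, hm⟩
    exact transGen_not_v advA_not_v m hm
  · refine transGen_not_v ?_ _
    rintro x (⟨m, _, hm⟩ | ⟨m, _, m', _, hm⟩) <;> exact advA_not_v _ hm
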